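/- Let (g_n)_{n≥1} be a sequence in L¹[0,1] with ‖g_n‖₁ = 1 for all n and pairwise disjoint supports. For t ∈ (1,2), let C_t := { s₁(t−1)g₁ + Σ_{n≥2} s_n g_n : s_n ≥ 0 for all n, Σ_{n≥1} s_n = 1 } and define T : C_t → C_t by T( s₁(t−1)g₁ + Σ_{n≥2} s_n g_n ) = Σ_{n≥1} s_n g_{n+1}. Then T is well defined (maps C_t into C_t), T is affine, and T has no fixed point in C_t. -/

import Mathlib

open MeasureTheory Filter Topology

/-- Lebesgue measure on `[0,1]`. -/
noncomputable def μ01 : Measure ℝ := volume.restrict (Set.Icc 0 1)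

instance : IsFiniteMeasure μ01 := by
  constructor
  simp [μ01, Real.volume_Icc]

/-- The set `C_t = { s₁(t-1)g₁ + Σ_{n≥2} s_n g_n : s_n ≥ 0, Σ s_n = 1 }` (here the sequence
`g` is indexed from `0`, so `g 0` plays the role of `g₁`). -/
noncomputable def Ct (g : ℕ → Lp ℝ 1 μ01) (t : ℝ) : Set (Lp ℝ 1 μ01) :=
  {f | ∃ s : ℕ → ℝ, (∀ n, 0 ≤ s n) ∧ (∑' n, s n) = 1 ∧
    f = ((t - 1) * s 0) • g 0 + ∑' n : ℕ, s (n + 1) • g (n + 1)}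

noncomputable def wgt (g : ℕ → Lp ℝ 1 μ01) (k : ℕ) : ℝ → ℝ :=
  fun x => if 0 < (g k : ℝ → ℝ) x then 1 else if (g k : ℝ → ℝ) x < 0 then -1 else 0

lemma wgt_meas (g : ℕ → Lp ℝ 1 μ01) (k : ℕ) : Measurable (wgt g k) := by
  have hv : Measurable ((g k : ℝ → ℝ)) := (L1.stronglyMeasurable_coeFn (g k)).measurable
  exact Measurable.ite (measurableSet_lt measurable_const hv) measurable_const
    (Measurable.ite (measurableSet_lt hv measurable_const) measurable_const measurable_const)

lemma wgt_abs (g : ℕ → Lp ℝ 1 μ01) (k : ℕ) (x : ℝ) : ‖wgt g k x‖ ≤ 1 := by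
  unfold wgt; split_ifs <;> norm_num

lemma wgt_mul (g : ℕ → Lp ℝ 1 μ01) (k : ℕ) (x : ℝ) :
    wgt g k x * (g k : ℝ → ℝ) x = ‖(g k : ℝ → ℝ) x‖ := by
  unfold wgt
  rcases lt_trichotomy (0 : ℝ) ((g k : ℝ → ℝ) x) with h | h | h
  · rw [if_pos h]; rw [Real.norm_eq_abs, abs_of_pos h, one_mul]
  · rw [if_neg (by rw [← h]; simp), if_neg (by rw [← h]; simp), zero_mul, ← h]; simp
  · rw [if_neg (by linarith), if_pos h, Real.norm_eq_abs, abs_of_neg h]; ring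

lemma wgt_zero (g : ℕ → Lp ℝ 1 μ01) (k : ℕ) (x : ℝ) (h : (g k : ℝ → ℝ) x = 0) :
    wgt g k x = 0 := by
  unfold wgt; rw [h]; simp

lemma int_aux (g : ℕ → Lp ℝ 1 μ01) (k : ℕ) (f : Lp ℝ 1 μ01) :
    Integrable (fun x => wgt g k x * f x) μ01 :=
  (L1.integrable_coeFn f).bdd_mul (wgt_meas g k).aestronglyMeasurable (Filter.Eventually.of_forall (wgt_abs g k))

noncomputable def Phi (g : ℕ → Lp ℝ 1 μ01) (k : ℕ) : Lp ℝ 1 μ01 →L[ℝ] ℝ :=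
  LinearMap.mkContinuous
    { toFun := fun f => ∫ x, wgt g k x * f x ∂μ01
      map_add' := by
        intro f h
        rw [← integral_add (int_aux g k f) (int_aux g k h)]
        refine integral_congr_ae ?_
        filter_upwards [Lp.coeFn_add f h] with x hx
        rw [hx, Pi.add_apply, mul_add]
      map_smul' := by
        intro c f
        simp only [RingHom.id_apply, smul_eq_mul]
        rw [← integral_const_mul]
        refine integral_congr_ae ?_
        filter_upwards [Lp.coeFn_smul c f] with x hx
        rw [hx, Pi.smul_apply, smul_eq_mul]; ring }
    1
    (by
      intro f
      simp only [LinearMap.coe_mk, AddHom.coe_mk, one_mul]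
      calc ‖∫ x, wgt g k x * f x ∂μ01‖ ≤ ∫ x, ‖wgt g k x * f x‖ ∂μ01 :=
            norm_integral_le_integral_norm _
        _ ≤ ∫ x, ‖f x‖ ∂μ01 := by
            refine integral_mono (int_aux g k f).norm ((L1.integrable_coeFn f).norm) ?_
            intro x
            simp only [norm_mul]
            calc ‖wgt g k x‖ * ‖f x‖ ≤ 1 * ‖f x‖ :=
                  mul_le_mul_of_nonneg_right (wgt_abs g k x) (norm_nonneg _)
              _ = ‖f x‖ := one_mul _
        _ = ‖f‖ := (L1.norm_eq_integral_norm f).symm)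

lemma Phi_apply (g : ℕ → Lp ℝ 1 μ01) (k : ℕ) (f : Lp ℝ 1 μ01) :
    Phi g k f = ∫ x, wgt g k x * f x ∂μ01 := rfl

lemma Phi_g (g : ℕ → Lp ℝ 1 μ01) (hnorm : ∀ n, ‖g n‖ = 1)
    (hdisj : ∀ m n : ℕ, m ≠ n → ∀ᵐ x ∂μ01, (g m : ℝ → ℝ) x = 0 ∨ (g n : ℝ → ℝ) x = 0)
    (k i : ℕ) : Phi g k (g i) = if i = k then 1 else 0 := by
  rcases eq_or_ne i k with rfl | h
  · rw [if_pos rfl, Phi_apply]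
    have : ∀ x, wgt g i x * (g i : ℝ → ℝ) x = ‖(g i : ℝ → ℝ) x‖ := wgt_mul g i
    rw [integral_congr_ae (Filter.Eventually.of_forall this)]
    rw [← L1.norm_eq_integral_norm]
    exact hnorm i
  · rw [if_neg h, Phi_apply]
    rw [show (0:ℝ) = ∫ (_ : ℝ), (0:ℝ) ∂μ01 by simp]
    refine integral_congr_ae ?_
    filter_upwards [hdisj k i (Ne.symm h)] with x hx
    rcases hx with hx | hx
    · rw [wgt_zero g k x hx, zero_mul]
    · rw [hx, mul_zero]

set_option maxHeartbeats 1000000 in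
set_option synthInstance.maxHeartbeats 400000 in
/-- The shift map `T(s₁(t-1)g₁ + Σ_{n≥2} s_n g_n) = Σ_{n≥1} s_n g_{n+1}` is well defined
(maps `C_t` into `C_t`), affine, and fixed point free on `C_t`. -/
theorem shift_map_affine_no_fixedPoint
    (g : ℕ → Lp ℝ 1 μ01) (hnorm : ∀ n, ‖g n‖ = 1)
    (hdisj : ∀ m n : ℕ, m ≠ n → ∀ᵐ x ∂μ01, (g m : ℝ → ℝ) x = 0 ∨ (g n : ℝ → ℝ) x = 0)
    (t : ℝ) (ht : t ∈ Set.Ioo (1 : ℝ) 2)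
    (T : Lp ℝ 1 μ01 → Lp ℝ 1 μ01)
    (hT : ∀ s : ℕ → ℝ, (∀ n, 0 ≤ s n) → (∑' n, s n) = 1 →
      T (((t - 1) * s 0) • g 0 + ∑' n : ℕ, s (n + 1) • g (n + 1)) =
        ∑' n : ℕ, s n • g (n + 1)) :
    Set.MapsTo T (Ct g t) (Ct g t) ∧
    (∀ f ∈ Ct g t, ∀ h ∈ Ct g t, ∀ l : ℝ, 0 ≤ l → l ≤ 1 →
      T (l • f + (1 - l) • h) = l • T f + (1 - l) • T h) ∧
    (∀ f ∈ Ct g t, T f ≠ f) := by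
  obtain ⟨ht1, ht2⟩ := ht
  have htne : t - 1 ≠ 0 := by intro h; linarith [h]
  -- summability from tsum = 1
  have key : ∀ s : ℕ → ℝ, (∑' n, s n) = 1 → Summable s := by
    intro s h1
    by_contra hns
    rw [tsum_eq_zero_of_not_summable hns] at h1
    norm_num at h1
  -- summability of vector series
  have habs : ∀ (a : ℕ → ℝ), Summable a → ∀ (k : ℕ → ℕ),
      Summable (fun n => a n • g (k n)) := by
    intro a ha k
    apply Summable.of_norm
    simpa [norm_smul, hnorm] using ha.abs
  refine ⟨?_, ?_, ?_⟩
  · -- MapsTo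
    rintro f ⟨s, hs0, hs1, hfe⟩
    have hTf : T f = ∑' n, s n • g (n + 1) := by rw [hfe]; exact hT s hs0 hs1
    refine ⟨fun n => Nat.casesOn n 0 s, fun n => ?_, ?_, ?_⟩
    · cases n with
      | zero => exact le_refl 0
      | succ m => exact hs0 m
    · have hs : Summable s := key s hs1
      have hu : Summable (fun n : ℕ => (Nat.casesOn n 0 s : ℝ)) :=
        (summable_nat_add_iff 1).1 (by simpa using hs)
      rw [Summable.tsum_eq_zero_add hu]
      simpa using hs1
    · rw [hTf]
      simp
  · -- affine
    rintro f ⟨s, hs0, hs1, hfe⟩ h ⟨r, hr0, hr1, hhe⟩ l hl0 hl1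
    have hs : Summable s := key s hs1
    have hr : Summable r := key r hr1
    set q : ℕ → ℝ := fun n => l * s n + (1 - l) * r n with hq
    have hq0 : ∀ n, 0 ≤ q n := fun n =>
      add_nonneg (mul_nonneg hl0 (hs0 n)) (mul_nonneg (by linarith) (hr0 n))
    have hql : Summable (fun n => l * s n) := hs.mul_left l
    have hqr : Summable (fun n => (1 - l) * r n) := hr.mul_left _
    have hq1 : (∑' n, q n) = 1 := by
      rw [hq]
      rw [Summable.tsum_add hql hqr, Summable.tsum_mul_left l hs, Summable.tsum_mul_left (1 - l) hr,
        hs1, hr1]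
      ring
    have hsum_s : Summable (fun n => s (n + 1) • g (n + 1)) :=
      habs _ ((summable_nat_add_iff 1).2 hs) _
    have hsum_r : Summable (fun n => r (n + 1) • g (n + 1)) :=
      habs _ ((summable_nat_add_iff 1).2 hr) _
    have hsum_ls : Summable (fun n => l • (s (n + 1) • g (n + 1))) := by
      have := habs (fun n => l * s (n + 1)) ((summable_nat_add_iff 1).2 hql) (fun n => n + 1)
      simpa [mul_smul] using this
    have hsum_lr : Summable (fun n => (1 - l) • (r (n + 1) • g (n + 1))) := by
      have := habs (fun n => (1 - l) * r (n + 1)) ((summable_nat_add_iff 1).2 hqr) (fun n => n + 1)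
      simpa [mul_smul] using this
    have key_eq : l • f + (1 - l) • h =
        ((t - 1) * q 0) • g 0 + ∑' n, q (n + 1) • g (n + 1) := by
      rw [hfe, hhe, smul_add, smul_add]
      rw [← Summable.tsum_const_smul l hsum_s, ← Summable.tsum_const_smul (1 - l) hsum_r]
      have h0 : ((t - 1) * q 0) • g 0 =
          l • ((t - 1) * s 0) • g 0 + (1 - l) • ((t - 1) * r 0) • g 0 := by
        rw [smul_smul, smul_smul, ← add_smul]
        congr 1
        simp only [hq]
        ring
      have h1 : (∑' n, q (n + 1) • g (n + 1)) =
          (∑' n, l • (s (n + 1) • g (n + 1))) + ∑' n, (1 - l) • (r (n + 1) • g (n + 1)) := by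
        rw [← Summable.tsum_add hsum_ls hsum_lr]
        refine tsum_congr fun n => ?_
        simp only [hq, smul_smul, ← add_smul]
      rw [h0, h1]
      abel
    rw [key_eq, hT q hq0 hq1, hfe, hhe, hT s hs0 hs1, hT r hr0 hr1]
    -- now scalar series identity on the image side
    have hsum_s' : Summable (fun n => s n • g (n + 1)) := habs s hs _
    have hsum_r' : Summable (fun n => r n • g (n + 1)) := habs r hr _
    have hsum_ls' : Summable (fun n => l • (s n • g (n + 1))) := by
      have := habs (fun n => l * s n) hql (fun n => n + 1)
      simpa [mul_smul] using this
    have hsum_lr' : Summable (fun n => (1 - l) • (r n • g (n + 1))) := by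
      have := habs (fun n => (1 - l) * r n) hqr (fun n => n + 1)
      simpa [mul_smul] using this
    rw [← Summable.tsum_const_smul l hsum_s', ← Summable.tsum_const_smul (1 - l) hsum_r',
      ← Summable.tsum_add hsum_ls' hsum_lr']
    refine tsum_congr fun n => ?_
    simp only [hq, smul_smul, ← add_smul]
  · -- no fixed point
    rintro f ⟨s, hs0, hs1, hfe⟩ hfix
    have hs : Summable s := key s hs1
    have hTf : T f = ∑' n, s n • g (n + 1) := by rw [hfe]; exact hT s hs0 hs1
    have hsum_s : Summable (fun n => s (n + 1) • g (n + 1)) :=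
      habs _ ((summable_nat_add_iff 1).2 hs) _
    have hsum_s' : Summable (fun n => s n • g (n + 1)) := habs s hs _
    have hPg := Phi_g g hnorm hdisj
    have hPhif : ∀ j, Phi g j f =
        ((t - 1) * s 0) * (if 0 = j then 1 else 0) +
          ∑' n, s (n + 1) * (if n + 1 = j then 1 else 0) := by
      intro j
      rw [hfe, map_add, _root_.map_smul, (Phi g j).map_tsum hsum_s]
      congr 1
      · rw [hPg j 0, smul_eq_mul]
      · refine tsum_congr fun n => ?_
        rw [_root_.map_smul, hPg j (n + 1), smul_eq_mul]
    have hPhiTf : ∀ j, Phi g j (T f) = ∑' n, s n * (if n + 1 = j then 1 else 0) := by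
      intro j
      rw [hTf, (Phi g j).map_tsum hsum_s']
      refine tsum_congr fun n => ?_
      rw [_root_.map_smul, hPg j (n + 1), smul_eq_mul]
    have h0 : s 0 = 0 := by
      have e1 := hPhif 0
      have e2 := hPhiTf 0
      rw [hfix] at e2
      rw [e1] at e2
      simp only [if_pos rfl, mul_one] at e2
      have z1 : (∑' n : ℕ, s (n + 1) * (if n + 1 = 0 then 1 else 0)) = 0 := by
        rw [show (fun n : ℕ => s (n + 1) * (if n + 1 = 0 then 1 else 0)) = fun _ => 0 from
          funext fun n => by simp]
        exact tsum_zero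
      have z2 : (∑' n : ℕ, s n * (if n + 1 = 0 then 1 else 0)) = 0 := by
        rw [show (fun n : ℕ => s n * (if n + 1 = 0 then 1 else 0)) = fun _ => 0 from
          funext fun n => by simp]
        exact tsum_zero
      rw [z1, z2] at e2
      norm_num at e2
      exact e2.resolve_left htne
    have hstep : ∀ k, s k = s (k + 1) := by
      intro k
      have e1 := hPhif (k + 1)
      have e2 := hPhiTf (k + 1)
      rw [hfix, e1] at e2
      have z1 : (∑' n : ℕ, s (n + 1) * (if n + 1 = k + 1 then 1 else 0)) = s (k + 1) := by
        rw [tsum_eq_single k (fun b hb => by simp [Nat.succ_inj, hb])]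
        simp
      have z2 : (∑' n : ℕ, s n * (if n + 1 = k + 1 then 1 else 0)) = s k := by
        rw [tsum_eq_single k (fun b hb => by simp [Nat.succ_inj, hb])]
        simp
      rw [z1, z2] at e2
      simp only [if_neg (Nat.succ_ne_zero k).symm, mul_zero, zero_add] at e2
      exact e2.symm
    have hall : ∀ n, s n = 0 := by
      intro n
      induction n with
      | zero => exact h0
      | succ m ih => rw [← hstep m]; exact ih
    rw [show s = fun _ => 0 from funext hall] at hs1
    rw [tsum_zero] at hs1
    norm_num at hs1
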